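/- Let (X,φ) and (Y,ψ) be irreducible Smale spaces, and let h : X → Y be a homeomorphism that gives rise to an asymptotic continuous orbit equivalence between (X,φ) and (Y,ψ) with cocycle data (c₁, c₂, d₁, d₂). If h is periodic point preserving, then h(φ(x)) = ψ^{c₁(x)}(h(x)) for all x ∈ X. -/

import Mathlib

open Filter Set Topology

noncomputable section

/-- Integer iterate of a homeomorphism. -/
def hIter {X : Type*} [TopologicalSpace X] (φ : X ≃ₜ X) (n : ℤ) (x : X) : X :=
  ((φ.toEquiv : Equiv.Perm X) ^ n) x

/-- The cocycle sums `f^n` of a function `f : X → ℤ` along the iterates of `φ`: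
`f^n(x) = Σ_{i=0}^{n-1} f(φ^i(x))` for `n > 0`, `f^0 = 0`, and
`f^n(x) = −Σ_{i=n}^{-1} f(φ^i(x))` for `n < 0`. -/
def cSum {X : Type*} [TopologicalSpace X] (φ : X ≃ₜ X) (f : X → ℤ) (n : ℤ) (x : X) : ℤ :=
  if 0 ≤ n then ∑ i ∈ Finset.range n.toNat, f (hIter φ i x)
  else -∑ i ∈ Finset.range (-n).toNat, f (hIter φ (n + i) x)

/-- Stable asymptotic pairs (limit definition). -/
def asympS {X : Type*} [MetricSpace X] (φ : X ≃ₜ X) : Set (X × X) :=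
  {p | Tendsto (fun n : ℕ => dist (hIter φ n p.1) (hIter φ n p.2)) atTop (nhds 0)}

/-- Unstable asymptotic pairs (limit definition). -/
def asympU {X : Type*} [MetricSpace X] (φ : X ≃ₜ X) : Set (X × X) :=
  {p | Tendsto (fun n : ℕ => dist (hIter φ (-(n : ℤ)) p.1) (hIter φ (-(n : ℤ)) p.2))
    atTop (nhds 0)}

/-- Asymptotic pairs (limit definition). -/
def asympA {X : Type*} [MetricSpace X] (φ : X ≃ₜ X) : Set (X × X) := asympS φ ∩ asympU φ

/-- The `ω`-limit set of `x`. -/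
def omegaSet {X : Type*} [MetricSpace X] (φ : X ≃ₜ X) (x : X) : Set X :=
  {z | ∃ n : ℕ → ℕ, StrictMono n ∧ Tendsto (fun i => hIter φ (n i) x) atTop (nhds z)}

/-- The `α`-limit set of `x`. -/
def alphaSet {X : Type*} [MetricSpace X] (φ : X ≃ₜ X) (x : X) : Set X :=
  {z | ∃ n : ℕ → ℤ, StrictAnti n ∧ Tendsto (fun i => hIter φ (n i) x) atTop (nhds z)}

/-- A Smale space structure on a compact metric space `X`. -/
structure SmaleSpace (X : Type*) [MetricSpace X] [CompactSpace X] where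
  phi : X ≃ₜ X
  eps : ℝ
  lam : ℝ
  br : X → X → X
  eps_pos : 0 < eps
  lam_pos : 0 < lam
  lam_lt_one : lam < 1
  br_cont : ContinuousOn (fun p : X × X => br p.1 p.2) {p : X × X | dist p.1 p.2 < eps}
  br_self : ∀ x : X, br x x = x
  br_assoc_left : ∀ x y z : X, dist x y < eps → dist (br x y) z < eps → dist x z < eps →
    br (br x y) z = br x z
  br_assoc_right : ∀ x y z : X, dist y z < eps → dist x (br y z) < eps → dist x z < eps →
    br x (br y z) = br x z
  phi_br : ∀ x y : X, dist x y < eps → dist (phi x) (phi y) < eps →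
    phi (br x y) = br (phi x) (phi y)
  contract_s : ∀ x y z : X, br y x = y → dist x y < eps → br z x = z → dist x z < eps →
    dist (phi y) (phi z) ≤ lam * dist y z
  contract_u : ∀ x y z : X, br x y = y → dist x y < eps → br x z = z → dist x z < eps →
    dist (phi.symm y) (phi.symm z) ≤ lam * dist y z

namespace SmaleSpace

variable {X Y : Type*} [MetricSpace X] [CompactSpace X] [MetricSpace Y] [CompactSpace Y]

/-- Local stable set `X^s(x,ε)`. -/
def Xs (S : SmaleSpace X) (x : X) (ε : ℝ) : Set X := {y | S.br y x = y ∧ dist x y < ε}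

/-- Local unstable set `X^u(x,ε)`. -/
def Xu (S : SmaleSpace X) (x : X) (ε : ℝ) : Set X := {y | S.br x y = y ∧ dist x y < ε}

def Gs0 (S : SmaleSpace X) : Set (X × X) := {p | p.2 ∈ S.Xs p.1 S.eps}

def Gu0 (S : SmaleSpace X) : Set (X × X) := {p | p.2 ∈ S.Xu p.1 S.eps}

/-- `G_φ^{s,n} = (φ×φ)^{-n}(G_φ^{s,0})`. -/
def GsN (S : SmaleSpace X) (n : ℤ) : Set (X × X) :=
  {p | (hIter S.phi n p.1, hIter S.phi n p.2) ∈ S.Gs0}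

/-- `G_φ^{u,n} = (φ×φ)^{n}(G_φ^{u,0})`. -/
def GuN (S : SmaleSpace X) (n : ℤ) : Set (X × X) :=
  {p | (hIter S.phi (-n) p.1, hIter S.phi (-n) p.2) ∈ S.Gu0}

def GaN (S : SmaleSpace X) (n : ℤ) : Set (X × X) := S.GsN n ∩ S.GuN n

/-- The asymptotic equivalence relation `G_φ^a = ⋃_{n ≥ 0} G_φ^{a,n}`. -/
def Ga (S : SmaleSpace X) : Set (X × X) := ⋃ n : ℕ, S.GaN n

lemma gaN_subset_ga (S : SmaleSpace X) (n : ℕ) : S.GaN n ⊆ S.Ga :=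
  Set.subset_iUnion (fun k : ℕ => S.GaN k) n

/-- The inductive limit topology on `G_φ^a`: a set is open iff its intersection with each
`G_φ^{a,n}` is open in the subspace topology from `X × X`. -/
def gaTopology (S : SmaleSpace X) : TopologicalSpace ↥S.Ga :=
  ⨆ n : ℕ, TopologicalSpace.coinduced (Set.inclusion (S.gaN_subset_ga n)) inferInstance

/-- Irreducibility of a Smale space. -/
def Irreducible (S : SmaleSpace X) : Prop :=
  ∀ U V : Set X, IsOpen U → U.Nonempty → IsOpen V → V.Nonempty →
    ∃ K : ℕ, ((hIter S.phi K '' U) ∩ V).Nonempty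

def IsPeriodicPoint (S : SmaleSpace X) (x : X) : Prop :=
  ∃ p : ℕ, 0 < p ∧ hIter S.phi p x = x

/-- `h` is a flip conjugacy between `(X,φ)` and `(Y,ψ)`. -/
def IsFlipConjugacy (S : SmaleSpace X) (T : SmaleSpace Y) (h : X ≃ₜ Y) : Prop :=
  (∀ x, h (S.phi x) = T.phi (h x)) ∨ (∀ x, h (S.phi x) = T.phi.symm (h x))

def FlipConjugate (S : SmaleSpace X) (T : SmaleSpace Y) : Prop :=
  ∃ h : X ≃ₜ Y, IsFlipConjugacy S T h

/-- An isomorphism of the principal étale groupoids `G_φ^a` and `G_ψ^a`: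
a bijection which is a homeomorphism for the inductive limit topologies and preserves
the (equivalence relation) groupoid structure. -/
structure GaIso (S : SmaleSpace X) (T : SmaleSpace Y) where
  toEquiv : ↥S.Ga ≃ ↥T.Ga
  cont : @Continuous _ _ S.gaTopology T.gaTopology toEquiv
  cont_symm : @Continuous _ _ T.gaTopology S.gaTopology toEquiv.symm
  map_mul : ∀ p q r : ↥S.Ga, (p : X × X).2 = (q : X × X).1 →
    (r : X × X) = ((p : X × X).1, (q : X × X).2) →
    (toEquiv p : Y × Y).2 = (toEquiv q : Y × Y).1 ∧
      (toEquiv r : Y × Y) = ((toEquiv p : Y × Y).1, (toEquiv q : Y × Y).2)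

end SmaleSpace

namespace SmaleSpace

variable {X Y : Type*} [MetricSpace X] [CompactSpace X] [MetricSpace Y] [CompactSpace Y]

/-- The data of an asymptotic continuous orbit equivalence between two Smale spaces
`(X,φ)` and `(Y,ψ)`: a homeomorphism `h : X → Y`, continuous functions `c₁ : X → ℤ`,
`c₂ : Y → ℤ` and continuous two-cocycle functions `d₁ : G_φ^a → ℤ`, `d₂ : G_ψ^a → ℤ`
satisfying conditions (1), (2) and (i)–(viii) of the definition of asymptotic continuous
orbit equivalence. -/
structure ACOEData (S : SmaleSpace X) (T : SmaleSpace Y) where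
  h : X ≃ₜ Y
  c₁ : X → ℤ
  c₂ : Y → ℤ
  d₁ : X → X → ℤ
  d₂ : Y → Y → ℤ
  c₁_cont : Continuous c₁
  c₂_cont : Continuous c₂
  d₁_cocycle : ∀ x z w : X, (x, z) ∈ S.Ga → (z, w) ∈ S.Ga → d₁ x z + d₁ z w = d₁ x w
  d₂_cocycle : ∀ y w v : Y, (y, w) ∈ T.Ga → (w, v) ∈ T.Ga → d₂ y w + d₂ w v = d₂ y v
  d₁_cont : @Continuous ↥S.Ga ℤ S.gaTopology _ fun p => d₁ (p : X × X).1 (p : X × X).2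
  d₂_cont : @Continuous ↥T.Ga ℤ T.gaTopology _ fun p => d₂ (p : Y × Y).1 (p : Y × Y).2
  cocycle_eq₁ : ∀ (m : ℤ) (x z : X), (x, z) ∈ S.Ga →
    cSum S.phi c₁ m x + d₁ (hIter S.phi m x) (hIter S.phi m z)
      = cSum S.phi c₁ m z + d₁ x z
  cocycle_eq₂ : ∀ (m : ℤ) (y w : Y), (y, w) ∈ T.Ga →
    cSum T.phi c₂ m y + d₂ (hIter T.phi m y) (hIter T.phi m w)
      = cSum T.phi c₂ m w + d₂ y w
  xi₁_mem : ∀ (n : ℤ) (x : X),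
    (hIter T.phi (cSum S.phi c₁ n x) (h x), h (hIter S.phi n x)) ∈ T.Ga
  xi₁_cont : ∀ n : ℤ, @Continuous X ↥T.Ga _ T.gaTopology
    fun x => ⟨(hIter T.phi (cSum S.phi c₁ n x) (h x), h (hIter S.phi n x)), xi₁_mem n x⟩
  xi₂_mem : ∀ (n : ℤ) (y : Y),
    (hIter S.phi (cSum T.phi c₂ n y) (h.symm y), h.symm (hIter T.phi n y)) ∈ S.Ga
  xi₂_cont : ∀ n : ℤ, @Continuous Y ↥S.Ga _ S.gaTopology
    fun y => ⟨(hIter S.phi (cSum T.phi c₂ n y) (h.symm y), h.symm (hIter T.phi n y)),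
      xi₂_mem n y⟩
  eta₁_mem : ∀ x z : X, (x, z) ∈ S.Ga → (hIter T.phi (d₁ x z) (h x), h z) ∈ T.Ga
  eta₁_cont : @Continuous ↥S.Ga ↥T.Ga S.gaTopology T.gaTopology
    fun p => ⟨(hIter T.phi (d₁ (p : X × X).1 (p : X × X).2) (h (p : X × X).1),
      h (p : X × X).2), eta₁_mem (p : X × X).1 (p : X × X).2 p.2⟩
  eta₂_mem : ∀ y w : Y, (y, w) ∈ T.Ga → (hIter S.phi (d₂ y w) (h.symm y), h.symm w) ∈ S.Ga
  eta₂_cont : @Continuous ↥T.Ga ↥S.Ga T.gaTopology S.gaTopology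
    fun p => ⟨(hIter S.phi (d₂ (p : Y × Y).1 (p : Y × Y).2) (h.symm (p : Y × Y).1),
      h.symm (p : Y × Y).2), eta₂_mem (p : Y × Y).1 (p : Y × Y).2 p.2⟩
  cond_v : ∀ (n : ℤ) (x : X),
    cSum T.phi c₂ (cSum S.phi c₁ n x) (h x)
      + d₂ (hIter T.phi (cSum S.phi c₁ n x) (h x)) (h (hIter S.phi n x)) = n
  cond_vi : ∀ (n : ℤ) (y : Y),
    cSum S.phi c₁ (cSum T.phi c₂ n y) (h.symm y)
      + d₁ (hIter S.phi (cSum T.phi c₂ n y) (h.symm y)) (h.symm (hIter T.phi n y)) = n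
  cond_vii : ∀ x z : X, (x, z) ∈ S.Ga →
    cSum T.phi c₂ (d₁ x z) (h x) + d₂ (hIter T.phi (d₁ x z) (h x)) (h z) = 0
  cond_viii : ∀ y w : Y, (y, w) ∈ T.Ga →
    cSum S.phi c₁ (d₂ y w) (h.symm y) + d₁ (hIter S.phi (d₂ y w) (h.symm y)) (h.symm w) = 0

/-- Asymptotic continuous orbit equivalence of Smale spaces. -/
def ACOE (S : SmaleSpace X) (T : SmaleSpace Y) : Prop := Nonempty (ACOEData S T)

/-- Asymptotic flip conjugacy: asymptotic continuous orbit equivalence in which the cocycle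
data can be chosen as `c₁ ≡ 1, c₂ ≡ 1, d₁ ≡ 0, d₂ ≡ 0` or as
`c₁ ≡ −1, c₂ ≡ −1, d₁ ≡ 0, d₂ ≡ 0`. -/
def AsymptoticallyFlipConjugate (S : SmaleSpace X) (T : SmaleSpace Y) : Prop :=
  ∃ A : ACOEData S T,
    (A.c₁ = (fun _ => 1) ∧ A.c₂ = (fun _ => 1) ∧
      A.d₁ = (fun _ _ => 0) ∧ A.d₂ = (fun _ _ => 0)) ∨
    (A.c₁ = (fun _ => -1) ∧ A.c₂ = (fun _ => -1) ∧
      A.d₁ = (fun _ _ => 0) ∧ A.d₂ = (fun _ _ => 0))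

end SmaleSpace


/-! ### Auxiliary lemmas for the proof -/

section HIterAux

variable {X : Type*} [TopologicalSpace X] (φ : X ≃ₜ X)

lemma hIter_add (m n : ℤ) (x : X) : hIter φ m (hIter φ n x) = hIter φ (m + n) x := by
  simp [hIter, zpow_add]

lemma hIter_zero (x : X) : hIter φ 0 x = x := by simp [hIter]

lemma hIter_one (x : X) : hIter φ 1 x = φ x := by simp [hIter]

lemma hIter_add_one (m : ℤ) (x : X) : hIter φ (m + 1) x = φ (hIter φ m x) := by
  rw [add_comm, ← hIter_add, hIter_one]

lemma hIter_sub_one (m : ℤ) (x : X) : hIter φ (m - 1) x = φ.symm (hIter φ m x) := by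
  have h : hIter φ (m - 1 + 1) x = φ (hIter φ (m - 1) x) := hIter_add_one φ (m - 1) x
  rw [sub_add_cancel] at h
  rw [h, Homeomorph.symm_apply_apply]

lemma hIter_continuous (n : ℤ) : Continuous (hIter φ n) := by
  induction n using Int.induction_on with
  | zero => exact continuous_id.congr fun x => (hIter_zero φ x).symm
  | succ k ih => exact (φ.continuous.comp ih).congr fun x => (hIter_add_one φ k x).symm
  | pred k ih => exact (φ.symm.continuous.comp ih).congr fun x => (hIter_sub_one φ (-k) x).symm

lemma cSum_one' (f : X → ℤ) (x : X) : cSum φ f 1 x = f x := by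
  simp [cSum, hIter_zero]

end HIterAux

lemma le_zero_of_forall_le_pow {lam C d : ℝ} (h0 : 0 ≤ lam) (h1 : lam < 1)
    (h : ∀ k : ℕ, d ≤ lam ^ k * C) : d ≤ 0 := by
  have h2 : Filter.Tendsto (fun k : ℕ => lam ^ k * C) Filter.atTop (nhds 0) := by
    simpa using (tendsto_pow_atTop_nhds_zero_of_lt_one h0 h1).mul_const C
  exact ge_of_tendsto' h2 h

namespace SmaleSpace

variable {X : Type*} [MetricSpace X] [CompactSpace X] (S : SmaleSpace X)

lemma stable_step {p q : X} (h1 : S.br q p = q) (h2 : dist p q < S.eps) :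
    S.br (S.phi q) (S.phi p) = S.phi q ∧ dist (S.phi p) (S.phi q) ≤ S.lam * dist p q := by
  have hd : dist (S.phi p) (S.phi q) ≤ S.lam * dist p q :=
    S.contract_s p p q (S.br_self p) (by simpa using S.eps_pos) h1 h2
  have hld : S.lam * dist p q < S.eps :=
    lt_of_le_of_lt (by nlinarith [dist_nonneg (x := p) (y := q), S.lam_pos, S.lam_lt_one] :
      S.lam * dist p q ≤ dist p q) h2
  have hd' : dist (S.phi p) (S.phi q) < S.eps := hd.trans_lt hld
  have hb := S.phi_br q p (by rwa [dist_comm]) (by rwa [dist_comm])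
  rw [h1] at hb
  exact ⟨hb.symm, hd⟩

lemma unstable_step {p q : X} (h1 : S.br p q = q) (h2 : dist p q < S.eps) :
    S.br (S.phi.symm p) (S.phi.symm q) = S.phi.symm q ∧
      dist (S.phi.symm p) (S.phi.symm q) ≤ S.lam * dist p q := by
  have hd : dist (S.phi.symm p) (S.phi.symm q) ≤ S.lam * dist p q :=
    S.contract_u p p q (S.br_self p) (by simpa using S.eps_pos) h1 h2
  have hld : S.lam * dist p q < S.eps :=
    lt_of_le_of_lt (by nlinarith [dist_nonneg (x := p) (y := q), S.lam_pos, S.lam_lt_one] :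
      S.lam * dist p q ≤ dist p q) h2
  have hd' : dist (S.phi.symm p) (S.phi.symm q) < S.eps := hd.trans_lt hld
  have hb := S.phi_br (S.phi.symm p) (S.phi.symm q) hd' (by simpa using h2)
  simp only [Homeomorph.apply_symm_apply] at hb
  rw [h1] at hb
  refine ⟨?_, hd⟩
  apply S.phi.injective
  rw [hb, Homeomorph.apply_symm_apply]

lemma stable_iter {p q : X} (h1 : S.br q p = q) (h2 : dist p q < S.eps) (k : ℕ) :
    S.br (hIter S.phi (k : ℤ) q) (hIter S.phi (k : ℤ) p) = hIter S.phi (k : ℤ) q ∧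
      dist (hIter S.phi (k : ℤ) p) (hIter S.phi (k : ℤ) q) ≤ S.lam ^ k * dist p q := by
  induction k with
  | zero => simpa [hIter_zero] using h1
  | succ k ih =>
    have hlt : dist (hIter S.phi (k : ℤ) p) (hIter S.phi (k : ℤ) q) < S.eps := by
      refine lt_of_le_of_lt (ih.2.trans ?_) h2
      have : S.lam ^ k ≤ 1 := pow_le_one₀ S.lam_pos.le S.lam_lt_one.le
      nlinarith [dist_nonneg (x := p) (y := q)]
    obtain ⟨hb, hd⟩ := S.stable_step ih.1 hlt
    have e : ((k + 1 : ℕ) : ℤ) = (k : ℤ) + 1 := by push_cast; ring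
    constructor
    · rw [e, hIter_add_one, hIter_add_one]; exact hb
    · rw [e, hIter_add_one, hIter_add_one]
      calc dist (S.phi (hIter S.phi (k:ℤ) p)) (S.phi (hIter S.phi (k:ℤ) q))
          ≤ S.lam * dist (hIter S.phi (k:ℤ) p) (hIter S.phi (k:ℤ) q) := hd
        _ ≤ S.lam * (S.lam ^ k * dist p q) := by
            exact mul_le_mul_of_nonneg_left ih.2 S.lam_pos.le
        _ = S.lam ^ (k + 1) * dist p q := by ring

lemma unstable_iter {p q : X} (h1 : S.br p q = q) (h2 : dist p q < S.eps) (k : ℕ) :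
    S.br (hIter S.phi (-(k : ℤ)) p) (hIter S.phi (-(k : ℤ)) q) = hIter S.phi (-(k : ℤ)) q ∧
      dist (hIter S.phi (-(k : ℤ)) p) (hIter S.phi (-(k : ℤ)) q) ≤ S.lam ^ k * dist p q := by
  induction k with
  | zero => simpa [hIter_zero] using h1
  | succ k ih =>
    have hlt : dist (hIter S.phi (-(k : ℤ)) p) (hIter S.phi (-(k : ℤ)) q) < S.eps := by
      refine lt_of_le_of_lt (ih.2.trans ?_) h2
      have : S.lam ^ k ≤ 1 := pow_le_one₀ S.lam_pos.le S.lam_lt_one.le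
      nlinarith [dist_nonneg (x := p) (y := q)]
    obtain ⟨hb, hd⟩ := S.unstable_step ih.1 hlt
    have e : (-((k + 1 : ℕ) : ℤ)) = (-(k : ℤ)) - 1 := by push_cast; ring
    constructor
    · rw [e, hIter_sub_one, hIter_sub_one]; exact hb
    · rw [e, hIter_sub_one, hIter_sub_one]
      calc dist (S.phi.symm (hIter S.phi (-(k:ℤ)) p)) (S.phi.symm (hIter S.phi (-(k:ℤ)) q))
          ≤ S.lam * dist (hIter S.phi (-(k:ℤ)) p) (hIter S.phi (-(k:ℤ)) q) := hd
        _ ≤ S.lam * (S.lam ^ k * dist p q) := by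
            exact mul_le_mul_of_nonneg_left ih.2 S.lam_pos.le
        _ = S.lam ^ (k + 1) * dist p q := by ring

end SmaleSpace

namespace SmaleSpace

variable {X : Type*} [MetricSpace X] [CompactSpace X] (S : SmaleSpace X)

lemma bracket_modulus {γ : ℝ} (hγ : 0 < γ) :
    ∃ t : ℝ, 0 < t ∧ t ≤ γ ∧ t ≤ S.eps / 2 ∧
      ∀ a b : X, dist a b ≤ t → dist (S.br a b) a ≤ γ ∧ dist (S.br a b) b ≤ γ := by
  by_contra hcon
  push_neg at hcon
  have hsel : ∀ n : ℕ, ∃ p : X × X, dist p.1 p.2 ≤ min (min γ (S.eps / 2)) (1 / (n + 1)) ∧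
      γ < dist (S.br p.1 p.2) p.1 + dist (S.br p.1 p.2) p.2 := by
    intro n
    have ht : 0 < min (min γ (S.eps / 2)) (1 / (n + 1)) := by
      have : (0:ℝ) < 1 / (n + 1) := by positivity
      have h2 : (0:ℝ) < S.eps / 2 := by linarith [S.eps_pos]
      exact lt_min (lt_min hγ h2) this
    obtain ⟨a, b, hab, hor⟩ := hcon _ ht (le_trans (min_le_left _ _) (min_le_left _ _))
      (le_trans (min_le_left _ _) (min_le_right _ _))
    refine ⟨(a, b), hab, ?_⟩
    rcases le_or_gt (dist (S.br a b) a) γ with h | h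
    · calc γ < dist (S.br a b) b := hor h
        _ ≤ _ := le_add_of_nonneg_left dist_nonneg
    · calc γ < dist (S.br a b) a := h
        _ ≤ _ := le_add_of_nonneg_right dist_nonneg
  choose pseq hd1 hd2 using hsel
  obtain ⟨p, -, σ, hσ, hp⟩ :=
    IsCompact.tendsto_subseq (isCompact_univ (X := X × X)) (fun n => Set.mem_univ (pseq n))
  have hdist0 : Tendsto (fun i => dist (pseq (σ i)).1 (pseq (σ i)).2) atTop (nhds 0) := by
    apply squeeze_zero (fun i => dist_nonneg)
      (fun i => le_trans (hd1 (σ i)) (min_le_right _ _))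
    have h1 : Tendsto (fun i : ℕ => 1 / ((σ i : ℝ) + 1)) atTop (nhds 0) := by
      apply Tendsto.comp (tendsto_one_div_add_atTop_nhds_zero_nat)
      exact hσ.tendsto_atTop
    exact h1
  have hpeq : p.1 = p.2 := by
    have h1 : Tendsto (fun i => dist (pseq (σ i)).1 (pseq (σ i)).2) atTop
        (nhds (dist p.1 p.2)) := by
      have := hp
      exact ((continuous_fst.tendsto p).comp hp).dist ((continuous_snd.tendsto p).comp hp)
    have := tendsto_nhds_unique h1 hdist0
    exact dist_le_zero.mp this.le
  -- continuity of the bracket at p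
  have hpmem : p ∈ {q : X × X | dist q.1 q.2 < S.eps} := by
    simp only [Set.mem_setOf_eq, hpeq, dist_self]; exact S.eps_pos
  have hopen : IsOpen {q : X × X | dist q.1 q.2 < S.eps} := by
    have : Continuous fun q : X × X => dist q.1 q.2 := by fun_prop
    exact isOpen_lt this continuous_const
  have hca : ContinuousAt (fun q : X × X => S.br q.1 q.2) p :=
    S.br_cont.continuousAt (hopen.mem_nhds hpmem)
  have hbrlim : Tendsto (fun i => S.br (pseq (σ i)).1 (pseq (σ i)).2) atTop
      (nhds (S.br p.1 p.2)) := hca.tendsto.comp hp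
  have hgoal : Tendsto (fun i => dist (S.br (pseq (σ i)).1 (pseq (σ i)).2) (pseq (σ i)).1
      + dist (S.br (pseq (σ i)).1 (pseq (σ i)).2) (pseq (σ i)).2) atTop (nhds 0) := by
    have h1 := hbrlim.dist ((continuous_fst.tendsto p).comp hp)
    have h2 := hbrlim.dist ((continuous_snd.tendsto p).comp hp)
    have e : S.br p.1 p.2 = p.1 := by rw [hpeq, S.br_self]
    have : dist (S.br p.1 p.2) p.1 + dist (S.br p.1 p.2) p.2 = 0 := by
      rw [e, hpeq]; simp
    simpa [this] using h1.add h2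
  have : γ ≤ 0 := ge_of_tendsto' hgoal fun i => (hd2 (σ i)).le
  linarith

lemma expansive :
    ∃ c : ℝ, 0 < c ∧ c < S.eps ∧ ∀ z w : X,
      (∀ n : ℤ, dist (hIter S.phi n z) (hIter S.phi n w) ≤ c) → z = w := by
  obtain ⟨t, ht0, htγ, hteps, hmod⟩ := S.bracket_modulus (γ := S.eps / 2) (by linarith [S.eps_pos])
  refine ⟨t, ht0, lt_of_le_of_lt hteps (by linarith [S.eps_pos]), ?_⟩
  intro z w hzw
  set γ : ℝ := S.eps / 2 with hγdef
  have hγeps : γ < S.eps := by rw [hγdef]; linarith [S.eps_pos]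
  set v : ℤ → X := fun n => S.br (hIter S.phi n z) (hIter S.phi n w) with hv
  have hdisp : ∀ n : ℤ, dist (v n) (hIter S.phi n z) ≤ γ ∧ dist (v n) (hIter S.phi n w) ≤ γ :=
    fun n => hmod _ _ (hzw n)
  have hlt : ∀ n : ℤ, dist (hIter S.phi n z) (hIter S.phi n w) < S.eps :=
    fun n => lt_of_le_of_lt (hzw n) (lt_of_le_of_lt hteps (by linarith [S.eps_pos]))
  have hbrs : ∀ n : ℤ, S.br (v n) (hIter S.phi n w) = v n := fun n =>
    S.br_assoc_left _ _ _ (hlt n) (lt_of_le_of_lt (hdisp n).2 hγeps) (hlt n)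
  have hbru : ∀ n : ℤ, S.br (hIter S.phi n z) (v n) = v n := fun n =>
    S.br_assoc_right _ _ _ (hlt n) (lt_of_le_of_lt (dist_comm (v n) _ ▸ (hdisp n).1) hγeps)
      (hlt n)
  have hstep : ∀ n : ℤ, S.phi (v n) = v (n + 1) := by
    intro n
    have h2 : dist (S.phi (hIter S.phi n z)) (S.phi (hIter S.phi n w)) < S.eps := by
      rw [← hIter_add_one, ← hIter_add_one]; exact hlt (n + 1)
    have := S.phi_br (hIter S.phi n z) (hIter S.phi n w) (hlt n) h2
    rw [hv]
    simp only []
    rw [this, ← hIter_add_one, ← hIter_add_one]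
  have hiter : ∀ (n : ℤ) (k : ℕ), hIter S.phi (k : ℤ) (v n) = v (n + k) := by
    intro n k
    induction k with
    | zero => simp [hIter_zero]
    | succ k ih =>
      have e : ((k + 1 : ℕ) : ℤ) = (k : ℤ) + 1 := by push_cast; ring
      rw [e, hIter_add_one, ih, hstep (n + k)]
      congr 1
      ring
  have hlam0 : (0:ℝ) ≤ S.lam := S.lam_pos.le
  have hsw : ∀ m : ℤ, v m = hIter S.phi m w := by
    intro m
    have hle : ∀ k : ℕ, dist (hIter S.phi m w) (v m) ≤ S.lam ^ k * γ := by
      intro k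
      have hq := (S.stable_iter (hbrs (m - k))
        (lt_of_le_of_lt (dist_comm (v (m - k)) _ ▸ (hdisp (m - k)).2) hγeps) k).2
      have e1 : hIter S.phi (k : ℤ) (hIter S.phi (m - k) w) = hIter S.phi m w := by
        rw [hIter_add]; congr 1; ring
      have e2 : hIter S.phi (k : ℤ) (v (m - k)) = v m := by
        rw [hiter (m - k) k]; congr 1; ring
      rw [e1, e2] at hq
      refine hq.trans ?_
      exact mul_le_mul_of_nonneg_left (dist_comm (v (m-k)) _ ▸ (hdisp (m - k)).2)
        (pow_nonneg hlam0 k)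
    have := le_zero_of_forall_le_pow hlam0 S.lam_lt_one hle
    exact (dist_le_zero.mp this).symm
  have hsz : ∀ m : ℤ, v m = hIter S.phi m z := by
    intro m
    have hle : ∀ k : ℕ, dist (hIter S.phi m z) (v m) ≤ S.lam ^ k * γ := by
      intro k
      have hq := (S.unstable_iter (hbru (m + k))
        (lt_of_le_of_lt (dist_comm (v (m + k)) _ ▸ (hdisp (m + k)).1) hγeps) k).2
      have e1 : hIter S.phi (-(k : ℤ)) (hIter S.phi (m + k) z) = hIter S.phi m z := by
        rw [hIter_add]; congr 1; ring
      have e2 : hIter S.phi (-(k : ℤ)) (v (m + k)) = v m := by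
        rw [← hiter m k, hIter_add]
        simp [hIter_zero]
      rw [e1, e2] at hq
      refine hq.trans ?_
      exact mul_le_mul_of_nonneg_left (dist_comm (v (m+k)) _ ▸ (hdisp (m + k)).1)
        (pow_nonneg hlam0 k)
    have := le_zero_of_forall_le_pow hlam0 S.lam_lt_one hle
    exact (dist_le_zero.mp this).symm
  have h0 := (hsz 0).symm.trans (hsw 0)
  rwa [hIter_zero, hIter_zero] at h0

end SmaleSpace

namespace SmaleSpace

variable {X : Type*} [MetricSpace X] [CompactSpace X] (S : SmaleSpace X)

lemma closing_aux {γ t : ℝ} (hγ : 0 < γ) (hγeps : γ < S.eps)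
    (ht : 0 < t) (hteps : t < S.eps)
    (hmod : ∀ a b : X, dist a b ≤ t → dist (S.br a b) a ≤ γ ∧ dist (S.br a b) b ≤ γ)
    (u : X) (K : ℕ) (hK : 1 ≤ K) (hlamK : S.lam ^ K * γ ≤ t / 2)
    (hret : dist (hIter S.phi (K : ℤ) u) u < t / 2) (N : ℕ) :
    ∃ v : X, dist v u ≤ S.lam ^ K * γ ∧
      ∀ j : ℕ, j ≤ N * K →
        dist (hIter S.phi (j : ℤ) v) (hIter S.phi ((j % K : ℕ) : ℤ) u)
          ≤ (γ + γ / (1 - S.lam)) - S.lam ^ j * (γ / (1 - S.lam)) := by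
  have hlam0 : (0:ℝ) < S.lam := S.lam_pos
  have hlam1 : S.lam < 1 := S.lam_lt_one
  have h1lam : (0:ℝ) < 1 - S.lam := by linarith
  have hD0 : 0 < γ / (1 - S.lam) := div_pos hγ h1lam
  have hDγ : γ / (1 - S.lam) * (1 - S.lam) = γ := div_mul_cancel₀ γ (ne_of_gt h1lam)
  induction N with
  | zero =>
    refine ⟨u, by simpa using mul_nonneg (pow_nonneg hlam0.le K) hγ.le, ?_⟩
    intro j hj
    have hj0 : j = 0 := by omega
    subst hj0
    simp only [Nat.zero_mod, Nat.cast_zero, hIter_zero, dist_self, pow_zero, one_mul]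
    linarith
  | succ N ih =>
    obtain ⟨v, hv0, hv⟩ := ih
    set a := hIter S.phi (K : ℤ) u with ha
    have hab : dist a v ≤ t := by
      calc dist a v ≤ dist a u + dist u v := dist_triangle a u v
        _ ≤ t / 2 + S.lam ^ K * γ := by
            rw [dist_comm u v]; exact add_le_add hret.le hv0
        _ ≤ t / 2 + t / 2 := by linarith
        _ = t := by ring
    set w := S.br a v with hw
    obtain ⟨hwa, hwv⟩ := hmod a v hab
    have habe : dist a v < S.eps := lt_of_le_of_lt hab hteps
    have hua : S.br a w = w := S.br_assoc_right a a v habe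
      (lt_of_le_of_lt (dist_comm w a ▸ hwa) hγeps) habe
    have hsv : S.br w v = w := S.br_assoc_left a v v habe
      (lt_of_le_of_lt hwv hγeps) habe
    have hdaw : dist a w < S.eps := lt_of_le_of_lt (dist_comm w a ▸ hwa) hγeps
    set v' := hIter S.phi (-(K : ℤ)) w with hv'
    have hwv' : hIter S.phi (K : ℤ) v' = w := by
      rw [hv', hIter_add]
      simp [hIter_zero]
    -- claim 1 : dist v' u
    have hv'u : dist v' u ≤ S.lam ^ K * γ := by
      have hq := (S.unstable_iter hua hdaw K).2
      have e1 : hIter S.phi (-(K : ℤ)) a = u := by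
        rw [ha, hIter_add]; simp [hIter_zero]
      rw [e1] at hq
      rw [dist_comm]
      refine hq.trans ?_
      exact mul_le_mul_of_nonneg_left (dist_comm w a ▸ hwa) (pow_nonneg hlam0.le K)
    -- claim 2 : backward segment
    have hback : ∀ j : ℕ, j ≤ K →
        dist (hIter S.phi (j : ℤ) v') (hIter S.phi (j : ℤ) u) ≤ S.lam ^ (K - j) * γ := by
      intro j hj
      have hq := (S.unstable_iter hua hdaw (K - j)).2
      have e1 : hIter S.phi (-((K - j : ℕ) : ℤ)) a = hIter S.phi (j : ℤ) u := by
        rw [ha, hIter_add]; congr 1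
        have : ((K - j : ℕ) : ℤ) = (K : ℤ) - (j : ℤ) := by
          exact_mod_cast Int.ofNat_sub hj
        rw [this]; ring
      have e2 : hIter S.phi (-((K - j : ℕ) : ℤ)) w = hIter S.phi (j : ℤ) v' := by
        rw [← hwv', hIter_add]; congr 1
        have : ((K - j : ℕ) : ℤ) = (K : ℤ) - (j : ℤ) := by
          exact_mod_cast Int.ofNat_sub hj
        rw [this]; ring
      rw [e1, e2] at hq
      rw [dist_comm]
      refine hq.trans ?_
      exact mul_le_mul_of_nonneg_left (dist_comm w a ▸ hwa) (pow_nonneg hlam0.le _)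
    -- forward decay
    have hfwd : ∀ i : ℕ, dist (hIter S.phi (i : ℤ) w) (hIter S.phi (i : ℤ) v)
        ≤ S.lam ^ i * γ := by
      intro i
      have hq := (S.stable_iter hsv (lt_of_le_of_lt (dist_comm w v ▸ hwv) hγeps) i).2
      rw [dist_comm]
      refine hq.trans ?_
      exact mul_le_mul_of_nonneg_left (dist_comm w v ▸ hwv) (pow_nonneg hlam0.le i)
    refine ⟨v', hv'u, ?_⟩
    intro j hj
    rcases lt_or_ge j K with hjK | hjK
    · rw [Nat.mod_eq_of_lt hjK]
      refine (hback j hjK.le).trans ?_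
      have h1 : S.lam ^ (K - j) * γ ≤ γ := by
        have : S.lam ^ (K - j) ≤ 1 := pow_le_one₀ hlam0.le hlam1.le
        nlinarith
      have h2 : S.lam ^ j * (γ / (1 - S.lam)) ≤ γ / (1 - S.lam) := by
        have : S.lam ^ j ≤ 1 := pow_le_one₀ hlam0.le hlam1.le
        nlinarith
      linarith
    · obtain ⟨i, rfl⟩ : ∃ i : ℕ, j = K + i := ⟨j - K, by omega⟩
      have hiN : i ≤ N * K := by
        have hj' : K + i ≤ (N + 1) * K := hj
        have : (N + 1) * K = N * K + K := by ring
        omega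
      have e3 : hIter S.phi ((K + i : ℕ) : ℤ) v' = hIter S.phi (i : ℤ) w := by
        rw [show ((K + i : ℕ) : ℤ) = (i : ℤ) + (K : ℤ) by push_cast; ring, ← hIter_add, hwv']
      rw [e3, Nat.add_mod_left]
      have htri := dist_triangle (hIter S.phi (i : ℤ) w) (hIter S.phi (i : ℤ) v)
        (hIter S.phi ((i % K : ℕ) : ℤ) u)
      have hsum : dist (hIter S.phi (i : ℤ) w) (hIter S.phi ((i % K : ℕ) : ℤ) u)
          ≤ S.lam ^ i * γ + ((γ + γ / (1 - S.lam)) - S.lam ^ i * (γ / (1 - S.lam))) :=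
        htri.trans (add_le_add (hfwd i) (hv i hiN))
      refine hsum.trans ?_
      have hpowK : S.lam ^ K ≤ S.lam := by
        calc S.lam ^ K ≤ S.lam ^ 1 := pow_le_pow_of_le_one hlam0.le hlam1.le hK
          _ = S.lam := pow_one _
      have hpadd : S.lam ^ (K + i) = S.lam ^ K * S.lam ^ i := pow_add _ _ _
      have hpi : (0:ℝ) ≤ S.lam ^ i := pow_nonneg hlam0.le i
      -- need : λ^i γ ≤ λ^i D - λ^{K+i} D  where D = γ/(1-λ), γ = D(1-λ)
      nlinarith [mul_nonneg hpi hD0.le, mul_le_mul_of_nonneg_right hpowK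
        (mul_nonneg hpi hD0.le)]

end SmaleSpace

namespace SmaleSpace

variable {X : Type*} [MetricSpace X] [CompactSpace X] (S : SmaleSpace X)

lemma closing_periodic {γ t c : ℝ} (hγ : 0 < γ) (hγeps : γ < S.eps)
    (ht : 0 < t) (hteps : t < S.eps)
    (hmod : ∀ a b : X, dist a b ≤ t → dist (S.br a b) a ≤ γ ∧ dist (S.br a b) b ≤ γ)
    (hc : ∀ z w : X, (∀ n : ℤ, dist (hIter S.phi n z) (hIter S.phi n w) ≤ c) → z = w)
    (hΓc : 2 * (γ + γ / (1 - S.lam)) ≤ c)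
    (u : X) (K : ℕ) (hK : 1 ≤ K) (hlamK : S.lam ^ K * γ ≤ t / 2)
    (hret : dist (hIter S.phi (K : ℤ) u) u < t / 2) :
    ∃ z : X, hIter S.phi (K : ℤ) z = z ∧ dist z u ≤ γ + γ / (1 - S.lam) := by
  have hlam0 : (0:ℝ) < S.lam := S.lam_pos
  have h1lam : (0:ℝ) < 1 - S.lam := by linarith [S.lam_lt_one]
  have hD0 : 0 ≤ γ / (1 - S.lam) := (div_pos hγ h1lam).le
  set Γ : ℝ := γ + γ / (1 - S.lam) with hΓ
  have haux := fun N : ℕ =>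
    S.closing_aux hγ hγeps ht hteps hmod u K hK hlamK hret (2 * N)
  choose V hV0 hV using haux
  set wseq : ℕ → X := fun N => hIter S.phi ((N * K : ℕ) : ℤ) (V N) with hwseq
  have hbound : ∀ N : ℕ, ∀ j : ℤ, |j| ≤ ((N * K : ℕ) : ℤ) →
      dist (hIter S.phi j (wseq N)) (hIter S.phi (j % (K : ℤ)) u) ≤ Γ := by
    intro N j hj
    have hj1 : -((N * K : ℕ) : ℤ) ≤ j := neg_le_of_abs_le hj
    have hj2 : j ≤ ((N * K : ℕ) : ℤ) := le_of_abs_le hj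
    have hJ0 : 0 ≤ j + ((N * K : ℕ) : ℤ) := by linarith
    set J : ℕ := (j + ((N * K : ℕ) : ℤ)).toNat with hJdef
    have hJ : (J : ℤ) = j + ((N * K : ℕ) : ℤ) := Int.toNat_of_nonneg hJ0
    have hJle : J ≤ 2 * N * K := by
      have : (J : ℤ) ≤ ((2 * N * K : ℕ) : ℤ) := by
        rw [hJ]; push_cast; push_cast at hj2; linarith
      exact_mod_cast this
    have h1 : hIter S.phi j (wseq N) = hIter S.phi (J : ℤ) (V N) := by
      rw [hwseq]
      simp only []
      rw [hIter_add, hJ]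
    have h2 : ((J % K : ℕ) : ℤ) = j % (K : ℤ) := by
      rw [Int.natCast_mod, hJ]
      push_cast
      rw [show j + (N : ℤ) * (K : ℤ) = j + (K : ℤ) * (N : ℤ) by ring,
        Int.add_mul_emod_self_left]
    have h3 := hV N J hJle
    rw [h1, ← h2]
    refine h3.trans ?_
    have : 0 ≤ S.lam ^ J * (γ / (1 - S.lam)) :=
      mul_nonneg (pow_nonneg hlam0.le J) hD0
    rw [hΓ]; linarith
  obtain ⟨z, -, σ, hσ, hz⟩ :=
    IsCompact.tendsto_subseq (isCompact_univ (X := X)) (fun N => Set.mem_univ (wseq N))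
  have hshadow : ∀ j : ℤ, dist (hIter S.phi j z) (hIter S.phi (j % (K : ℤ)) u) ≤ Γ := by
    intro j
    have hcv : Tendsto (fun i => dist (hIter S.phi j (wseq (σ i)))
        (hIter S.phi (j % (K : ℤ)) u)) atTop
        (nhds (dist (hIter S.phi j z) (hIter S.phi (j % (K : ℤ)) u))) :=
      (((hIter_continuous S.phi j).tendsto z).comp hz).dist tendsto_const_nhds
    refine le_of_tendsto hcv ?_
    filter_upwards [eventually_ge_atTop j.natAbs] with i hi
    apply hbound
    have h1 : j.natAbs ≤ σ i := hi.trans hσ.le_apply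
    calc |j| = (j.natAbs : ℤ) := Int.abs_eq_natAbs j
      _ ≤ ((σ i : ℕ) : ℤ) := by exact_mod_cast h1
      _ ≤ ((σ i * K : ℕ) : ℤ) := by
          have : σ i ≤ σ i * K := Nat.le_mul_of_pos_right _ (by omega)
          exact_mod_cast this
  have hper : ∀ n : ℤ, dist (hIter S.phi n z) (hIter S.phi n (hIter S.phi (K : ℤ) z)) ≤ c := by
    intro n
    have e : hIter S.phi n (hIter S.phi (K : ℤ) z) = hIter S.phi (n + K) z := hIter_add _ _ _ _
    have h1 := hshadow n
    have h2 := hshadow (n + K)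
    have e2 : (n + (K : ℤ)) % (K : ℤ) = n % (K : ℤ) := by
      rw [show n + (K : ℤ) = n + (K : ℤ) * 1 by ring, Int.add_mul_emod_self_left]
    rw [e2] at h2
    calc dist (hIter S.phi n z) (hIter S.phi n (hIter S.phi (K : ℤ) z))
        = dist (hIter S.phi n z) (hIter S.phi (n + K) z) := by rw [e]
      _ ≤ dist (hIter S.phi n z) (hIter S.phi (n % (K : ℤ)) u)
          + dist (hIter S.phi (n % (K : ℤ)) u) (hIter S.phi (n + K) z) := dist_triangle _ _ _
      _ ≤ Γ + Γ := add_le_add h1 (by rw [dist_comm]; exact h2)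
      _ ≤ c := by linarith
  have hz0 := hc z (hIter S.phi (K : ℤ) z) hper
  refine ⟨z, hz0.symm, ?_⟩
  have h0 := hshadow 0
  rw [Int.zero_emod] at h0
  simpa [hIter_zero] using h0

lemma exists_periodic_near (hS : S.Irreducible) (x : X) {ε : ℝ} (hε : 0 < ε) :
    ∃ p : X, S.IsPeriodicPoint p ∧ dist p x < ε := by
  obtain ⟨c, hc0, hceps, hexp⟩ := S.expansive
  have hlam0 : (0:ℝ) < S.lam := S.lam_pos
  have h1lam : (0:ℝ) < 1 - S.lam := by linarith [S.lam_lt_one]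
  set γ : ℝ := (1 - S.lam) / 4 * min c ε with hγdef
  have hminpos : 0 < min c ε := lt_min hc0 hε
  have hγ : 0 < γ := by positivity
  have hγle : γ ≤ min c ε / 4 := by
    rw [hγdef]
    rw [div_mul_eq_mul_div, div_le_div_iff₀ (by norm_num) (by norm_num)]
    nlinarith [hminpos, S.lam_pos]
  have hD : γ / (1 - S.lam) = min c ε / 4 := by
    rw [hγdef]; field_simp
  have hΓle : γ + γ / (1 - S.lam) ≤ min c ε / 2 := by
    rw [hD]; linarith
  have hγeps : γ < S.eps := by
    have : min c ε / 4 < S.eps := by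
      have := min_le_left c ε
      linarith
    linarith
  obtain ⟨t, ht0, htγ, hteps2, hmod⟩ := S.bracket_modulus (γ := γ) hγ
  have hteps : t < S.eps := lt_of_le_of_lt hteps2 (by linarith [S.eps_pos])
  -- choose K₀ with lam ^ K₀ * γ ≤ t / 2
  obtain ⟨n0, hn0⟩ : ∃ n : ℕ, S.lam ^ n * γ < t / 2 := by
    have htend : Tendsto (fun n : ℕ => S.lam ^ n * γ) atTop (nhds 0) := by
      simpa using (tendsto_pow_atTop_nhds_zero_of_lt_one hlam0.le S.lam_lt_one).mul_const γ
    have := (htend.eventually (eventually_lt_nhds (by positivity : (0:ℝ) < t / 2))).exists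
    exact this
  set K₀ : ℕ := n0 + 1 with hK₀
  have hK₀1 : 1 ≤ K₀ := by omega
  have hlamK₀ : S.lam ^ K₀ * γ ≤ t / 2 := by
    have hp : S.lam ^ K₀ ≤ S.lam ^ n0 :=
      pow_le_pow_of_le_one hlam0.le S.lam_lt_one.le (by omega)
    have := mul_le_mul_of_nonneg_right hp hγ.le
    linarith
  set r : ℝ := min (t / 4) (ε / 4) with hr
  have hr0 : 0 < r := lt_min (by positivity) (by positivity)
  -- irreducibility : find a return with time ≥ K₀
  have hUopen : IsOpen (Metric.ball x r) := Metric.isOpen_ball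
  have hUne : (Metric.ball x r).Nonempty := ⟨x, Metric.mem_ball_self hr0⟩
  have hVopen : IsOpen ((hIter S.phi (K₀ : ℤ)) ⁻¹' (Metric.ball x r)) :=
    hUopen.preimage (hIter_continuous S.phi (K₀ : ℤ))
  have hVne : ((hIter S.phi (K₀ : ℤ)) ⁻¹' (Metric.ball x r)).Nonempty := by
    refine ⟨hIter S.phi (-(K₀ : ℤ)) x, ?_⟩
    simp only [Set.mem_preimage]
    rw [hIter_add]
    simp only [add_neg_cancel, hIter_zero]
    exact Metric.mem_ball_self hr0
  obtain ⟨K, hKne⟩ := hS (Metric.ball x r) _ hUopen hUne hVopen hVne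
  obtain ⟨y, ⟨a, haU, rfl⟩, hyV⟩ := hKne
  have haU2 : hIter S.phi ((K₀ + K : ℕ) : ℤ) a ∈ Metric.ball x r := by
    have : hIter S.phi (K₀ : ℤ) (hIter S.phi (K : ℤ) a) ∈ Metric.ball x r := hyV
    rwa [hIter_add, show (K₀ : ℤ) + (K : ℤ) = ((K₀ + K : ℕ) : ℤ) by push_cast; ring] at this
  set K' : ℕ := K₀ + K with hK'
  have hK'1 : 1 ≤ K' := by omega
  have hret : dist (hIter S.phi (K' : ℤ) a) a < t / 2 := by
    have h1 : dist (hIter S.phi (K' : ℤ) a) x < r := haU2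
    have h2 : dist a x < r := haU
    have h4 : r ≤ t / 4 := min_le_left _ _
    calc dist (hIter S.phi (K' : ℤ) a) a
        ≤ dist (hIter S.phi (K' : ℤ) a) x + dist x a := dist_triangle _ _ _
      _ < r + r := by rw [dist_comm x a]; exact add_lt_add h1 h2
      _ ≤ t / 2 := by linarith
  have hlamK' : S.lam ^ K' * γ ≤ t / 2 := by
    have hp : S.lam ^ K' ≤ S.lam ^ K₀ :=
      pow_le_pow_of_le_one hlam0.le S.lam_lt_one.le (by omega)
    have := mul_le_mul_of_nonneg_right hp hγ.le
    linarith
  have hΓc : 2 * (γ + γ / (1 - S.lam)) ≤ c := by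
    have := min_le_left c ε
    linarith
  obtain ⟨z, hzper, hzu⟩ := S.closing_periodic hγ hγeps ht0 hteps hmod hexp hΓc a K' hK'1
    hlamK' hret
  refine ⟨z, ⟨K', by omega, hzper⟩, ?_⟩
  have h2 : dist a x < r := haU
  have hre : r ≤ ε / 4 := min_le_right _ _
  have hΓε : γ + γ / (1 - S.lam) ≤ ε / 2 := by
    have := min_le_right c ε
    linarith
  calc dist z x ≤ dist z a + dist a x := dist_triangle _ _ _
    _ < (γ + γ / (1 - S.lam)) + r := by exact add_lt_add_of_le_of_lt hzu h2
    _ ≤ ε / 2 + ε / 4 := add_le_add hΓε hre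
    _ < ε := by linarith

end SmaleSpace

namespace SmaleSpace

variable {X : Type*} [MetricSpace X] [CompactSpace X] (S : SmaleSpace X)

lemma isPeriodicPoint_iter_mul {x : X} {p : ℕ} (hp : hIter S.phi (p : ℤ) x = x) (m : ℕ) :
    hIter S.phi ((m * p : ℕ) : ℤ) x = x := by
  induction m with
  | zero => simp [hIter_zero]
  | succ m ih =>
    have e : (((m + 1) * p : ℕ) : ℤ) = (p : ℤ) + ((m * p : ℕ) : ℤ) := by push_cast; ring
    rw [e, ← hIter_add, ih, hp]

lemma isPeriodicPoint_phi {x : X} (hx : S.IsPeriodicPoint x) :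
    S.IsPeriodicPoint (S.phi x) := by
  obtain ⟨p, hp0, hp⟩ := hx
  refine ⟨p, hp0, ?_⟩
  have : hIter S.phi (p : ℤ) (hIter S.phi 1 x) = hIter S.phi 1 (hIter S.phi (p : ℤ) x) := by
    rw [hIter_add, hIter_add, add_comm]
  rw [hIter_one, hIter_one, hp] at this
  exact this

lemma isPeriodicPoint_hIter {x : X} (hx : S.IsPeriodicPoint x) (m : ℤ) :
    S.IsPeriodicPoint (hIter S.phi m x) := by
  obtain ⟨p, hp0, hp⟩ := hx
  refine ⟨p, hp0, ?_⟩
  have : hIter S.phi (p : ℤ) (hIter S.phi m x) = hIter S.phi m (hIter S.phi (p : ℤ) x) := by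
    rw [hIter_add, hIter_add, add_comm]
  rw [hp] at this
  exact this

lemma ga_periodic_eq {y w : X} (hga : (y, w) ∈ S.Ga)
    (hy : S.IsPeriodicPoint y) (hw : S.IsPeriodicPoint w) : y = w := by
  obtain ⟨n₀, hn⟩ := Set.mem_iUnion.mp hga
  obtain ⟨hs, -⟩ := hn
  obtain ⟨hbr, hdist⟩ := hs
  obtain ⟨py, hpy0, hpy⟩ := hy
  obtain ⟨pw, hpw0, hpw⟩ := hw
  set P : ℕ := py * pw with hP
  have hP1 : 1 ≤ P := by
    have := Nat.mul_le_mul hpy0 hpw0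
    simpa [hP] using this
  have hyP : ∀ m : ℕ, hIter S.phi ((m * P : ℕ) : ℤ) y = y := by
    intro m
    have : hIter S.phi (((m * pw) * py : ℕ) : ℤ) y = y := S.isPeriodicPoint_iter_mul hpy _
    rwa [show (m * pw) * py = m * P by rw [hP]; ring] at this
  have hwP : ∀ m : ℕ, hIter S.phi ((m * P : ℕ) : ℤ) w = w := by
    intro m
    have : hIter S.phi (((m * py) * pw : ℕ) : ℤ) w = w := S.isPeriodicPoint_iter_mul hpw _
    rwa [show (m * py) * pw = m * P by rw [hP]; ring] at this
  have hle : ∀ i : ℕ, dist y w ≤ S.lam ^ i * S.eps := by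
    intro i
    set m : ℕ := n₀ + i with hm
    have hmP : n₀ + i ≤ m * P := by
      calc n₀ + i = m := hm.symm
        _ = m * 1 := (mul_one m).symm
        _ ≤ m * P := Nat.mul_le_mul_left m hP1
    set k : ℕ := m * P - n₀ with hk
    have hkn : k + n₀ = m * P := by omega
    have hki : i ≤ k := by omega
    have hq := (S.stable_iter hbr hdist k).2
    have e0 : (k : ℤ) + (n₀ : ℤ) = ((m * P : ℕ) : ℤ) := by exact_mod_cast hkn
    have e1 : hIter S.phi (k : ℤ) (hIter S.phi (n₀ : ℤ) y) = y := by
      rw [hIter_add, e0]; exact hyP m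
    have e2 : hIter S.phi (k : ℤ) (hIter S.phi (n₀ : ℤ) w) = w := by
      rw [hIter_add, e0]; exact hwP m
    rw [e1, e2] at hq
    refine hq.trans ?_
    have h1 : S.lam ^ k * dist (hIter S.phi (n₀ : ℤ) y) (hIter S.phi (n₀ : ℤ) w)
        ≤ S.lam ^ k * S.eps :=
      mul_le_mul_of_nonneg_left hdist.le (pow_nonneg S.lam_pos.le k)
    have h2 : S.lam ^ k ≤ S.lam ^ i :=
      pow_le_pow_of_le_one S.lam_pos.le S.lam_lt_one.le hki
    have h3 : S.lam ^ k * S.eps ≤ S.lam ^ i * S.eps :=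
      mul_le_mul_of_nonneg_right h2 S.eps_pos.le
    linarith
  have := le_zero_of_forall_le_pow S.lam_pos.le S.lam_lt_one hle
  exact dist_le_zero.mp this

end SmaleSpace

/-- If a periodic point preserving homeomorphism `h` gives rise to an
asymptotic continuous orbit equivalence between irreducible Smale spaces, then
`h(φ(x)) = ψ^{c₁(x)}(h(x))` for all `x ∈ X`. -/
theorem acoe_periodicPreserving_orbit_equation {X Y : Type*} [MetricSpace X]
    [CompactSpace X] [MetricSpace Y] [CompactSpace Y]
    (S : SmaleSpace X) (T : SmaleSpace Y)
    (hS : S.Irreducible) (hT : T.Irreducible)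
    (A : SmaleSpace.ACOEData S T)
    (hpp : ∀ x : X, S.IsPeriodicPoint x → T.IsPeriodicPoint (A.h x)) :
    ∀ x : X, A.h (S.phi x) = hIter T.phi (A.c₁ x) (A.h x) := by
  intro x
  -- Step 1 : the equation holds at every periodic point.
  have key : ∀ p : X, S.IsPeriodicPoint p →
      A.h (S.phi p) = hIter T.phi (A.c₁ p) (A.h p) := by
    intro p hp
    have hmem := A.xi₁_mem 1 p
    rw [cSum_one' S.phi A.c₁ p, hIter_one] at hmem
    have hper1 : T.IsPeriodicPoint (hIter T.phi (A.c₁ p) (A.h p)) :=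
      T.isPeriodicPoint_hIter (hpp p hp) (A.c₁ p)
    have hper2 : T.IsPeriodicPoint (A.h (S.phi p)) :=
      hpp _ (S.isPeriodicPoint_phi hp)
    exact (T.ga_periodic_eq hmem hper1 hper2).symm
  -- Step 2 : periodic points are dense, pass to the limit.
  have hdense : ∀ n : ℕ, ∃ p : X, S.IsPeriodicPoint p ∧ dist p x < 1 / (n + 1) := by
    intro n
    exact S.exists_periodic_near hS x (by positivity)
  choose pseq hper hdist using hdense
  have hlim : Tendsto pseq atTop (nhds x) := by
    rw [tendsto_iff_dist_tendsto_zero]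
    apply squeeze_zero (fun n => dist_nonneg) (fun n => (hdist n).le)
    exact tendsto_one_div_add_atTop_nhds_zero_nat
  have hc1 : ∀ᶠ n in atTop, A.c₁ (pseq n) = A.c₁ x := by
    have hopen : IsOpen {y : X | A.c₁ y = A.c₁ x} := by
      have : {y : X | A.c₁ y = A.c₁ x} = A.c₁ ⁻¹' {A.c₁ x} := rfl
      rw [this]
      exact (isOpen_discrete _).preimage A.c₁_cont
    have hmem : {y : X | A.c₁ y = A.c₁ x} ∈ nhds x := hopen.mem_nhds rfl
    exact hlim.eventually_mem hmem
  have heq : ∀ᶠ n in atTop,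
      A.h (S.phi (pseq n)) = hIter T.phi (A.c₁ x) (A.h (pseq n)) := by
    filter_upwards [hc1] with n hn
    rw [← hn]
    exact key _ (hper n)
  have t1 : Tendsto (fun n => A.h (S.phi (pseq n))) atTop (nhds (A.h (S.phi x))) :=
    ((A.h.continuous.comp S.phi.continuous).tendsto x).comp hlim
  have t2 : Tendsto (fun n => hIter T.phi (A.c₁ x) (A.h (pseq n))) atTop
      (nhds (hIter T.phi (A.c₁ x) (A.h x))) :=
    (((hIter_continuous T.phi (A.c₁ x)).comp A.h.continuous).tendsto x).comp hlim
  exact tendsto_nhds_unique_of_eventuallyEq t1 t2 heq
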